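/- No gonosomal algebra is power associative: for any gonosomal algebra A of type (n,ν) over K, defining powers by x^1 = x and x^{m+1} = x·x^m, it is not the case that x^{i+j} = x^i · x^j for all x ∈ A and all integers i, j ≥ 1. -/

import Mathlib

/-- Powers in a (not necessarily associative) algebra with multiplication `mul`,
defined by `x^1 = x` and `x^{m+1} = x · x^m` (with junk value `0` at exponent `0`). -/
def gonPow {K A : Type*} [Field K] [AddCommGroup A] [Module K A]
    (mul : A →ₗ[K] A →ₗ[K] A) (x : A) : ℕ → A
  | 0 => 0
  | 1 => x
  | m + 2 => mul x (gonPow mul x (m + 1))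

/-- No gonosomal algebra is power associative. -/
theorem gonosomal_not_powerAssociative
    {K : Type*} [Field K] (hchar : ringChar K ≠ 2)
    {n ν : ℕ} (hn : 1 ≤ n) (hν : 1 ≤ ν)
    {A : Type*} [AddCommGroup A] [Module K A]
    (mul : A →ₗ[K] A →ₗ[K] A)
    (b : Module.Basis (Fin n ⊕ Fin ν) K A)
    (γ : Fin n → Fin ν → Fin n → K) (γt : Fin n → Fin ν → Fin ν → K)
    (hee : ∀ i j : Fin n, mul (b (Sum.inl i)) (b (Sum.inl j)) = 0)
    (hff : ∀ p q : Fin ν, mul (b (Sum.inr p)) (b (Sum.inr q)) = 0)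
    (hef : ∀ (i : Fin n) (p : Fin ν),
      mul (b (Sum.inl i)) (b (Sum.inr p)) =
        (∑ k, γ i p k • b (Sum.inl k)) + (∑ r, γt i p r • b (Sum.inr r)))
    (hfe : ∀ (i : Fin n) (p : Fin ν),
      mul (b (Sum.inr p)) (b (Sum.inl i)) = mul (b (Sum.inl i)) (b (Sum.inr p)))
    (hsum : ∀ (i : Fin n) (p : Fin ν),
      (∑ k, γ i p k) + (∑ r, γt i p r) = 1) :
    ¬ (∀ (x : A) (i j : ℕ), 1 ≤ i → 1 ≤ j →
        gonPow mul x (i + j) = mul (gonPow mul x i) (gonPow mul x j)) := by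
  intro h
  classical
  have h2 : (2:K) ≠ 0 := Ring.two_ne_zero hchar
  set sE : A →ₗ[K] K := ∑ k : Fin n, b.coord (Sum.inl k) with hsEdef
  set sF : A →ₗ[K] K := ∑ r : Fin ν, b.coord (Sum.inr r) with hsFdef
  have cEe : ∀ k : Fin n, sE (b (Sum.inl k)) = 1 := by
    intro k
    simp [hsEdef, Module.Basis.coord_apply, Module.Basis.repr_self, Finsupp.single_apply]
  have cEf : ∀ p : Fin ν, sE (b (Sum.inr p)) = 0 := by
    intro p
    simp [hsEdef, Module.Basis.coord_apply, Module.Basis.repr_self, Finsupp.single_apply]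
  have cFe : ∀ k : Fin n, sF (b (Sum.inl k)) = 0 := by
    intro k
    simp [hsFdef, Module.Basis.coord_apply, Module.Basis.repr_self, Finsupp.single_apply]
  have cFf : ∀ p : Fin ν, sF (b (Sum.inr p)) = 1 := by
    intro p
    simp [hsFdef, Module.Basis.coord_apply, Module.Basis.repr_self, Finsupp.single_apply]
  -- weights of the basic products
  have prodE : ∀ (i : Fin n) (p : Fin ν),
      sE (mul (b (Sum.inl i)) (b (Sum.inr p))) = ∑ k, γ i p k := by
    intro i p
    rw [hef]
    simp [map_add, map_sum, map_smul, cEe, cEf]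
  have prodF : ∀ (i : Fin n) (p : Fin ν),
      sF (mul (b (Sum.inl i)) (b (Sum.inr p))) = ∑ r, γt i p r := by
    intro i p
    rw [hef]
    simp [map_add, map_sum, map_smul, cFe, cFf]
  have prodEF : ∀ (i : Fin n) (p : Fin ν),
      sE (mul (b (Sum.inl i)) (b (Sum.inr p))) +
        sF (mul (b (Sum.inl i)) (b (Sum.inr p))) = 1 := by
    intro i p
    rw [prodE, prodF]
    exact hsum i p
  -- total weight of any product
  have key1 : ∀ (s' : Fin n ⊕ Fin ν) (w : A),
      sE (mul w (b s')) + sF (mul w (b s')) =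
        sE w * sF (b s') + sE (b s') * sF w := by
    intro s'
    have hmap : (sE + sF) ∘ₗ (mul.flip (b s')) =
        sF (b s') • sE + sE (b s') • sF := by
      apply b.ext
      intro s
      rcases s with i | p <;> rcases s' with j | q <;>
        simp [LinearMap.flip_apply, hee, hff, hfe, cEe, cEf, cFe, cFf,
          smul_eq_mul, prodEF]
    intro w
    have hw := LinearMap.congr_fun hmap w
    simp only [LinearMap.comp_apply, LinearMap.flip_apply, LinearMap.add_apply,
      LinearMap.smul_apply, smul_eq_mul] at hw
    rw [hw]; ring
  have keyΩ : ∀ (w w' : A),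
      sE (mul w w') + sF (mul w w') = sE w * sF w' + sE w' * sF w := by
    intro w
    have hmap : (sE + sF) ∘ₗ (mul w) = sE w • sF + sF w • sE := by
      apply b.ext
      intro s'
      have hw := key1 s' w
      simp only [LinearMap.comp_apply, LinearMap.add_apply,
        LinearMap.smul_apply, smul_eq_mul]
      rw [hw]; ring
    intro w'
    have hw := LinearMap.congr_fun hmap w'
    simp only [LinearMap.comp_apply, LinearMap.add_apply,
      LinearMap.smul_apply, smul_eq_mul] at hw
    rw [hw]; ring
  -- Stage 1: both weights of every product e_i * f_p equal 1/2
  have stage1 : ∀ (i : Fin n) (p : Fin ν),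
      2 * sE (mul (b (Sum.inl i)) (b (Sum.inr p))) = 1 ∧
      2 * sF (mul (b (Sum.inl i)) (b (Sum.inr p))) = 1 := by
    intro i p
    set x : A := b (Sum.inl i) + b (Sum.inr p) with hxdef
    have hpa : mul x (mul x (mul x x)) = mul (mul x x) (mul x x) :=
      h x 2 2 one_le_two one_le_two
    have hxE : sE x = 1 := by rw [hxdef, map_add, cEe, cEf, add_zero]
    have hxF : sF x = 1 := by rw [hxdef, map_add, cFe, cFf, zero_add]
    have hac : sE (mul (b (Sum.inl i)) (b (Sum.inr p))) +
        sF (mul (b (Sum.inl i)) (b (Sum.inr p))) = 1 := prodEF i p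
    have hx2 : mul x x = (2:K) • mul (b (Sum.inl i)) (b (Sum.inr p)) := by
      rw [hxdef]
      simp only [map_add, LinearMap.add_apply]
      rw [hee i i, hff p p, hfe i p, two_smul]
      abel
    have hE2 : sE (mul x x) = 2 * sE (mul (b (Sum.inl i)) (b (Sum.inr p))) := by
      rw [hx2, map_smul, smul_eq_mul]
    have hF2 : sF (mul x x) = 2 * sF (mul (b (Sum.inl i)) (b (Sum.inr p))) := by
      rw [hx2, map_smul, smul_eq_mul]
    have h3 := keyΩ x (mul x x)
    rw [hxE, hxF, hE2, hF2] at h3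
    have h4 := keyΩ x (mul x (mul x x))
    rw [hxE, hxF] at h4
    have h5 := keyΩ (mul x x) (mul x x)
    rw [hE2, hF2] at h5
    rw [hpa] at h4
    have h6 : 8 * (sE (mul (b (Sum.inl i)) (b (Sum.inr p))) *
        sF (mul (b (Sum.inl i)) (b (Sum.inr p)))) = 2 := by
      linear_combination h5.symm + h4 + h3 + 2 * hac
    have hsq2 : 2 * (2 * sE (mul (b (Sum.inl i)) (b (Sum.inr p))) - 1)^2 = 0 := by
      linear_combination (-1 : K) * h6 +
        (8 * sE (mul (b (Sum.inl i)) (b (Sum.inr p)))) * hac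
    have hsq : (2 * sE (mul (b (Sum.inl i)) (b (Sum.inr p))) - 1)^2 = 0 :=
      (mul_eq_zero.mp hsq2).resolve_left h2
    have hla : 2 * sE (mul (b (Sum.inl i)) (b (Sum.inr p))) - 1 = 0 :=
      sq_eq_zero_iff.mp hsq
    constructor
    · linear_combination hla
    · linear_combination 2 * hac - hla
  -- Stage 2 auxiliary lemmas
  have hMEE : ∀ (i : Fin n) (w : A),
      2 * sE (mul (b (Sum.inl i)) w) = sF w := by
    intro i
    have hmap : (2:K) • (sE ∘ₗ mul (b (Sum.inl i))) = sF := by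
      apply b.ext
      intro s
      rcases s with k | r <;>
        simp [hee, cEe, cEf, cFe, cFf, (stage1 i _).1, smul_eq_mul]
    intro w
    have hw := LinearMap.congr_fun hmap w
    simpa [smul_eq_mul] using hw
  have hMEF : ∀ (i : Fin n) (w : A),
      2 * sF (mul (b (Sum.inl i)) w) = sF w := by
    intro i
    have hmap : (2:K) • (sF ∘ₗ mul (b (Sum.inl i))) = sF := by
      apply b.ext
      intro s
      rcases s with k | r <;>
        simp [hee, cEe, cEf, cFe, cFf, (stage1 i _).2, smul_eq_mul]
    intro w
    have hw := LinearMap.congr_fun hmap w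
    simpa [smul_eq_mul] using hw
  have hMFE : ∀ (p : Fin ν) (w : A),
      2 * sE (mul (b (Sum.inr p)) w) = sE w := by
    intro p
    have hmap : (2:K) • (sE ∘ₗ mul (b (Sum.inr p))) = sE := by
      apply b.ext
      intro s
      rcases s with k | r <;>
        simp [hff, hfe, cEe, cEf, cFe, cFf, (stage1 _ p).1, smul_eq_mul]
    intro w
    have hw := LinearMap.congr_fun hmap w
    simpa [smul_eq_mul] using hw
  have hMFF : ∀ (p : Fin ν) (w : A),
      2 * sF (mul (b (Sum.inr p)) w) = sE w := by
    intro p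
    have hmap : (2:K) • (sF ∘ₗ mul (b (Sum.inr p))) = sE := by
      apply b.ext
      intro s
      rcases s with k | r <;>
        simp [hff, hfe, cEe, cEf, cFe, cFf, (stage1 _ p).2, smul_eq_mul]
    intro w
    have hw := LinearMap.congr_fun hmap w
    simpa [smul_eq_mul] using hw
  -- Stage 2: the element x = e - f violates power associativity
  set i0 : Fin n := ⟨0, hn⟩ with hi0
  set p0 : Fin ν := ⟨0, hν⟩ with hp0
  set x : A := b (Sum.inl i0) - b (Sum.inr p0) with hxdef
  have hpa : mul x (mul x (mul x x)) = mul (mul x x) (mul x x) :=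
    h x 2 2 one_le_two one_le_two
  have hxE : sE x = 1 := by rw [hxdef, map_sub, cEe, cEf, sub_zero]
  have hxF : sF x = -1 := by rw [hxdef, map_sub, cFe, cFf, zero_sub]
  have hxEw : ∀ w : A, 2 * sE (mul x w) = sF w - sE w := by
    intro w
    rw [hxdef, map_sub, LinearMap.sub_apply, map_sub]
    linear_combination hMEE i0 w - hMFE p0 w
  have hxFw : ∀ w : A, 2 * sF (mul x w) = sF w - sE w := by
    intro w
    rw [hxdef, map_sub, LinearMap.sub_apply, map_sub]
    linear_combination hMEF i0 w - hMFF p0 w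
  have k1 := hxEw x
  rw [hxE, hxF] at k1
  have k2 := hxFw x
  rw [hxE, hxF] at k2
  have e2E : sE (mul x x) = -1 := mul_left_cancel₀ h2 (by linear_combination k1)
  have e2F : sF (mul x x) = -1 := mul_left_cancel₀ h2 (by linear_combination k2)
  have e3E : sE (mul x (mul x x)) = 0 :=
    mul_left_cancel₀ h2 (by linear_combination hxEw (mul x x) + e2F - e2E)
  have e3F : sF (mul x (mul x x)) = 0 :=
    mul_left_cancel₀ h2 (by linear_combination hxFw (mul x x) + e2F - e2E)
  have e4 := keyΩ x (mul x (mul x x))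
  rw [hxE, hxF, e3E, e3F] at e4
  have e4' : sE (mul x (mul x (mul x x))) + sF (mul x (mul x (mul x x))) = 0 := by
    rw [e4]; ring
  have rhs : sE (mul (mul x x) (mul x x)) + sF (mul (mul x x) (mul x x)) = 2 := by
    have k6 := keyΩ (mul x x) (mul x x)
    rw [e2E, e2F] at k6
    rw [k6]; norm_num
  rw [hpa] at e4'
  exact h2 (rhs.symm.trans e4')
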